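/- Let F be the filter on ω consisting of all F ⊆ ω with lim_{n→∞} |F ∩ [2ⁿ, 2ⁿ⁺¹)|/2ⁿ = 1, and let X = ω ∪ {∞} be topologized so that each n ∈ ω is isolated and the neighborhoods of ∞ are the sets F ∪ {∞} for F ∈ F. Then the point ∞ has no countable i-network in X: for every countable family (N_i)_{i∈ω} of infinite subsets of X there is a neighborhood of ∞ containing no N_i. -/

import Mathlib

open Set Filter Topology

/-- let `F` be the density filter of sets `A` with
`lim_n |A ∩ [2ⁿ,2ⁿ⁺¹)|/2ⁿ = 1`, and topologize `X = ω ∪ {∞}` (here `Option ℕ`, with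
`∞ = none`) so that points of `ω` are isolated and neighborhoods of `∞` are given by
members of `F`.  Then `∞` has no countable i-network. -/
theorem stmt17 (t : TopologicalSpace (Option ℕ))
    (ht : ∀ U : Set (Option ℕ), t.IsOpen U ↔
      (none ∈ U → Filter.Tendsto
        (fun n : ℕ =>
          (({m : ℕ | some m ∈ U} ∩ Set.Ico (2 ^ n) (2 ^ (n + 1))).ncard : ℝ) / 2 ^ n)
        Filter.atTop (𝓝 1))) :
    ∀ N : ℕ → Set (Option ℕ), (∀ i, (N i).Infinite) →
      ∃ U : Set (Option ℕ), t.IsOpen U ∧ none ∈ U ∧ ∀ i, ¬N i ⊆ U := by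
  intro N hN
  have hM : ∀ i : ℕ, ∃ m : ℕ, some m ∈ N i ∧ 2 ^ i ≤ m := by
    intro i
    have h1 : (N i \ {none}).Infinite := (hN i).diff (finite_singleton _)
    have h2 : ((some : ℕ → Option ℕ) ⁻¹' (N i \ {none})).Infinite := by
      apply h1.preimage
      rintro (_ | k) hx
      · exact absurd rfl hx.2
      · exact ⟨k, rfl⟩
    obtain ⟨m, hm, hlt⟩ := h2.exists_gt (2 ^ i)
    exact ⟨m, hm.1, hlt.le⟩
  choose m hmN hmge using hM
  set S : Set ℕ := Set.range m with hS
  refine ⟨{none} ∪ some '' Sᶜ, ?_, Or.inl rfl, ?_⟩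
  · rw [ht]
    intro _
    have hset : {k : ℕ | some k ∈ ({none} ∪ some '' Sᶜ : Set (Option ℕ))} = Sᶜ := by
      ext k
      simp [Set.mem_image, Option.some.injEq]
    rw [hset]
    have hfin : ∀ n : ℕ, (Set.Ico (2 ^ n) (2 ^ (n + 1)) : Set ℕ).Finite :=
      fun n => Set.finite_Ico _ _
    have hcard : ∀ n : ℕ, (Set.Ico (2 ^ n) (2 ^ (n + 1)) : Set ℕ).ncard = 2 ^ n := by
      intro n
      rw [← Finset.coe_Ico, Set.ncard_coe_finset, Nat.card_Ico, pow_succ]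
      omega
    have hSblock : ∀ n : ℕ, (S ∩ Set.Ico (2 ^ n) (2 ^ (n + 1))).ncard ≤ n + 1 := by
      intro n
      have hsub : S ∩ Set.Ico (2 ^ n) (2 ^ (n + 1)) ⊆ m '' Set.Iic n := by
        rintro x ⟨⟨i, rfl⟩, hx⟩
        refine ⟨i, ?_, rfl⟩
        have h1 : (2 : ℕ) ^ i < 2 ^ (n + 1) := lt_of_le_of_lt (hmge i) hx.2
        have h2 : i < n + 1 := (pow_lt_pow_iff_right₀ one_lt_two).mp h1
        exact Nat.lt_succ_iff.mp h2
      calc (S ∩ Set.Ico (2 ^ n) (2 ^ (n + 1))).ncard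
          ≤ (m '' Set.Iic n).ncard := Set.ncard_le_ncard hsub ((Set.finite_Iic n).image m)
        _ ≤ (Set.Iic n).ncard := Set.ncard_image_le (Set.finite_Iic n)
        _ = n + 1 := by rw [← Finset.coe_Iic, Set.ncard_coe_finset, Nat.card_Iic]
    have hdecomp : ∀ n : ℕ, (Sᶜ ∩ Set.Ico (2 ^ n) (2 ^ (n + 1))).ncard
        + (S ∩ Set.Ico (2 ^ n) (2 ^ (n + 1))).ncard = 2 ^ n := by
      intro n
      have hun : (Sᶜ ∩ Set.Ico (2 ^ n) (2 ^ (n + 1))) ∪ (S ∩ Set.Ico (2 ^ n) (2 ^ (n + 1)))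
          = Set.Ico (2 ^ n) (2 ^ (n + 1)) := by
        rw [← Set.union_inter_distrib_right, Set.compl_union_self, Set.univ_inter]
      have hdis : Disjoint (Sᶜ ∩ Set.Ico (2 ^ n) (2 ^ (n + 1)))
          (S ∩ Set.Ico (2 ^ n) (2 ^ (n + 1))) :=
        (disjoint_compl_left).mono Set.inter_subset_left Set.inter_subset_left
      calc (Sᶜ ∩ Set.Ico (2 ^ n) (2 ^ (n + 1))).ncard
            + (S ∩ Set.Ico (2 ^ n) (2 ^ (n + 1))).ncard
          = ((Sᶜ ∩ Set.Ico (2 ^ n) (2 ^ (n + 1)))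
            ∪ (S ∩ Set.Ico (2 ^ n) (2 ^ (n + 1)))).ncard :=
            (Set.ncard_union_eq hdis ((hfin n).subset Set.inter_subset_right)
              ((hfin n).subset Set.inter_subset_right)).symm
        _ = (Set.Ico (2 ^ n) (2 ^ (n + 1)) : Set ℕ).ncard := by rw [hun]
        _ = 2 ^ n := hcard n
    have hlow : ∀ n : ℕ, (2 : ℝ) ^ n - (n + 1) ≤
        ((Sᶜ ∩ Set.Ico (2 ^ n) (2 ^ (n + 1))).ncard : ℝ) := by
      intro n
      have h1 := hdecomp n
      have h2 := hSblock n
      have h3 : ((Sᶜ ∩ Set.Ico (2 ^ n) (2 ^ (n + 1))).ncard : ℝ)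
          = 2 ^ n - ((S ∩ Set.Ico (2 ^ n) (2 ^ (n + 1))).ncard : ℝ) := by
        have := congrArg (fun k : ℕ => (k : ℝ)) h1
        push_cast at this ⊢
        linarith
      rw [h3]
      have h4 : ((S ∩ Set.Ico (2 ^ n) (2 ^ (n + 1))).ncard : ℝ) ≤ (n : ℝ) + 1 := by
        exact_mod_cast h2
      linarith
    have hhigh : ∀ n : ℕ, ((Sᶜ ∩ Set.Ico (2 ^ n) (2 ^ (n + 1))).ncard : ℝ) ≤ 2 ^ n := by
      intro n
      have h1 := hdecomp n
      have : (Sᶜ ∩ Set.Ico (2 ^ n) (2 ^ (n + 1))).ncard ≤ 2 ^ n := by omega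
      exact_mod_cast this
    have h0 : Tendsto (fun n : ℕ => ((n : ℝ) + 1) / 2 ^ n) atTop (𝓝 0) := by
      have ha := tendsto_pow_const_div_const_pow_of_one_lt 1 (one_lt_two (α := ℝ))
      have hb : Tendsto (fun n : ℕ => ((1 : ℝ) / 2) ^ n) atTop (𝓝 0) :=
        tendsto_pow_atTop_nhds_zero_of_lt_one (by norm_num) (by norm_num)
      have := ha.add hb
      simp only [add_zero] at this
      apply this.congr
      intro n
      rw [pow_one, div_pow, one_pow, ← add_div]
    have hlo_tendsto : Tendsto (fun n : ℕ => ((2 : ℝ) ^ n - (n + 1)) / 2 ^ n) atTop (𝓝 1) := by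
      have := (tendsto_const_nhds (x := (1 : ℝ)) (f := (atTop : Filter ℕ))).sub h0
      simp only [sub_zero] at this
      apply this.congr
      intro n
      have hpos : (0 : ℝ) < 2 ^ n := by positivity
      field_simp
    apply tendsto_of_tendsto_of_tendsto_of_le_of_le hlo_tendsto
      (tendsto_const_nhds (x := (1 : ℝ)))
    · intro n
      exact div_le_div_of_nonneg_right (hlow n) (by positivity)
    · intro n
      rw [div_le_one (by positivity)]
      exact hhigh n
  · intro i hsub
    have h := hsub (hmN i)
    rcases h with h | ⟨k, hk, hkeq⟩
    · simp at h
    · have hk' : k = m i := by injection hkeq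
      subst hk'
      exact hk ⟨i, rfl⟩
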